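/- Let I be a finite set, v : I → ℝ, ε ∈ ℝ, B ⊆ I with |B| ≤ f (the bad indices), and S' ⊆ I with |S'| ≥ 2f+1 such that v(j) ≤ ε for every j ∈ S' \ B. Let R ⊆ I satisfy |R| = |I| − f and v(r) ≥ v(j) for every r ∈ R and every j ∈ I \ R (i.e., R is obtained from I by deleting f indices carrying the f smallest values). Then there exists r ∈ R ∩ (S' \ B) with v(r) ≤ ε; in particular min_{r∈R} v(r) ≤ ε. -/
import Mathlib


/-- **Trimming lemma (upper bound).** Let `I` be a finite set, `v : I → ℝ`, `ε ∈ ℝ`, `B ⊆ I` with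
`|B| ≤ f` (the bad indices), and `S' ⊆ I` with `|S'| ≥ 2f+1` such that `v j ≤ ε` for every
`j ∈ S' \ B`. Let `R ⊆ I` satisfy `|R| = |I| − f` and `v r ≥ v j` for every `r ∈ R` and every
`j ∈ I \ R` (i.e. `R` is obtained from `I` by deleting `f` indices carrying the `f` smallest
values). Then there exists `r ∈ R ∩ (S' \ B)` with `v r ≤ ε`; in particular
`min_{r ∈ R} v r ≤ ε`. -/
theorem trim_upper_bound {ι : Type*} [DecidableEq ι] (f : ℕ)
    (I : Finset ι)
    (v : ι → ℝ) (ε : ℝ)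
    (B : Finset ι) (hB_sub : B ⊆ I) (hB_card : B.card ≤ f)
    (S' : Finset ι) (hS'_sub : S' ⊆ I) (hS'_card : 2 * f + 1 ≤ S'.card)
    (hS'_small : ∀ j ∈ S' \ B, v j ≤ ε)
    (R : Finset ι) (hR_sub : R ⊆ I) (hR_card : R.card = I.card - f)
    (hR_high : ∀ r ∈ R, ∀ j ∈ I \ R, v j ≤ v r) :
    (∃ r ∈ R ∩ (S' \ B), v r ≤ ε) ∧ sInf (v '' (R : Set ι)) ≤ ε := by
  have hfI : f ≤ I.card := by
    have := Finset.card_le_card hS'_sub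
    omega
  have hIR : (I \ R).card = f := by
    rw [Finset.card_sdiff_of_subset hR_sub, hR_card]; omega
  have hSB : f + 1 ≤ (S' \ B).card := by
    have h1 : (S' \ B).card ≥ S'.card - B.card := Finset.le_card_sdiff B S'
    omega
  -- there is an element of S' \ B inside R
  have hne : ∃ r, r ∈ (S' \ B) ∩ R := by
    by_contra h
    push_neg at h
    have hsub : S' \ B ⊆ I \ R := by
      intro x hx
      rw [Finset.mem_sdiff]
      exact ⟨hS'_sub (Finset.mem_sdiff.mp hx).1, fun hxR => h x (Finset.mem_inter.mpr ⟨hx, hxR⟩)⟩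
    have := Finset.card_le_card hsub
    omega
  obtain ⟨r, hr⟩ := hne
  rw [Finset.mem_inter] at hr
  have hrmem : r ∈ R ∩ (S' \ B) := Finset.mem_inter.mpr ⟨hr.2, hr.1⟩
  have hvr : v r ≤ ε := hS'_small r hr.1
  refine ⟨⟨r, hrmem, hvr⟩, ?_⟩
  have hbdd : BddBelow (v '' (R : Set ι)) := (R.finite_toSet.image v).bddBelow
  exact le_trans (csInf_le hbdd ⟨r, hr.2, rfl⟩) hvr
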